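/- arXiv:2409.20240 — 3 statements merged into one kernel-verified Lean document; each statement's English description precedes it below -/
import Mathlib

section
/- Let n ≥ 3 be an integer. For all integers a and b, the matrices M₁(a,b) and M₂(a,b) are conjugate in SO_w(2n,ℂ): there exists g ∈ GL_{2n}(ℂ) with gᵀ w_{2n} g = w_{2n}, det g = 1, and g · M₁(a,b) · g⁻¹ = M₂(a,b). -/
open Matrix

noncomputable section

/-- The `m × m` antidiagonal permutation matrix over `ℂ`:
entry `(j,k)` is `1` if `j + k + 1 = m` (0-based indices, i.e. `j + k = m + 1` 1-based)
and `0` otherwise. -/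
def wMat (m : ℕ) : Matrix (Fin m) (Fin m) ℂ :=
  Matrix.of fun j k => if (j : ℕ) + (k : ℕ) + 1 = m then 1 else 0

/-- Diagonal entries of the matrix `M₁(a,b)` (0-based indexing of positions `1,…,2n`):
`i^a` in position `1`, `i^(a+b)` in positions `2,…,n−1`, `i^b` in position `n`,
`(−i)^b` in position `n+1`, `(−i)^(a+b)` in positions `n+2,…,2n−1`, `(−i)^a` in position `2n`. -/
def d1 (n : ℕ) (a b : ℤ) : Fin (2 * n) → ℂ := fun j =>
  if (j : ℕ) = 0 then Complex.I ^ a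
  else if (j : ℕ) ≤ n - 2 then Complex.I ^ (a + b)
  else if (j : ℕ) = n - 1 then Complex.I ^ b
  else if (j : ℕ) = n then (-Complex.I) ^ b
  else if (j : ℕ) ≤ 2 * n - 2 then (-Complex.I) ^ (a + b)
  else (-Complex.I) ^ a

/-- Diagonal entries of `M₂(a,b)`: same as `M₁(a,b)` with the entries in
positions `n` and `n+1` (1-based) interchanged. -/
def d2 (n : ℕ) (a b : ℤ) : Fin (2 * n) → ℂ := fun j =>
  if (j : ℕ) = n - 1 then (-Complex.I) ^ b
  else if (j : ℕ) = n then Complex.I ^ b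
  else d1 n a b j

def M1 (n : ℕ) (a b : ℤ) : Matrix (Fin (2 * n)) (Fin (2 * n)) ℂ :=
  Matrix.diagonal (d1 n a b)

def M2 (n : ℕ) (a b : ℤ) : Matrix (Fin (2 * n)) (Fin (2 * n)) ℂ :=
  Matrix.diagonal (d2 n a b)

/-! ### Auxiliary lemmas -/

/-- A swap of an antidiagonal pair commutes with `Fin.rev`. -/
lemma swap_rev_comm {m : ℕ} (p q : Fin m) (hq : q = Fin.rev p) (x : Fin m) :
    Equiv.swap p q (Fin.rev x) = Fin.rev (Equiv.swap p q x) := by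
  subst hq
  rcases eq_or_ne x p with rfl | hxp
  · simp
  · rcases eq_or_ne x (Fin.rev p) with rfl | hxq
    · simp
    · have h1 : Fin.rev x ≠ p := fun h => hxq (by rw [← Fin.rev_rev x, h])
      have h2 : Fin.rev x ≠ Fin.rev p := fun h => hxp (Fin.rev_injective h)
      rw [Equiv.swap_apply_of_ne_of_ne hxp hxq, Equiv.swap_apply_of_ne_of_ne h1 h2]

lemma fin_pair_iff {m : ℕ} (j k : Fin m) : ((j : ℕ) + (k : ℕ) + 1 = m) ↔ k = Fin.rev j := by
  rw [Fin.ext_iff, Fin.val_rev]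
  omega

/-- Permutation matrices of rev-commuting permutations preserve `wMat`. -/
lemma perm_w {m : ℕ} (σ : Equiv.Perm (Fin m)) (hσ : ∀ x, σ (Fin.rev x) = Fin.rev (σ x)) :
    (σ.permMatrix ℂ)ᵀ * wMat m * σ.permMatrix ℂ = wMat m := by
  have hσ' : ∀ x, σ⁻¹ (Fin.rev x) = Fin.rev (σ⁻¹ x) := by
    intro x
    apply σ.injective
    rw [hσ, Equiv.Perm.coe_inv, Equiv.apply_symm_apply, Equiv.apply_symm_apply]
  have hT : (σ.permMatrix ℂ)ᵀ = (σ⁻¹).permMatrix ℂ := by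
    show _ = (σ.symm).toPEquiv.toMatrix
    rw [Equiv.toPEquiv_symm, PEquiv.toMatrix_symm]
  rw [hT, PEquiv.toMatrix_toPEquiv_mul, PEquiv.mul_toMatrix_toPEquiv]
  ext j k
  simp only [submatrix_apply, wMat, Matrix.of_apply, id_eq]
  congr 1
  show (((σ⁻¹) j : ℕ) + ((σ.symm) k : ℕ) + 1 = m) = _
  rw [fin_pair_iff, fin_pair_iff]
  show ((σ⁻¹) k = Fin.rev ((σ⁻¹) j)) = _
  rw [← hσ']
  simp [EmbeddingLike.apply_eq_iff_eq]

lemma perm_inv {m : ℕ} (σ : Equiv.Perm (Fin m)) :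
    (σ.permMatrix ℂ)⁻¹ = (σ⁻¹).permMatrix ℂ := by
  apply Matrix.inv_eq_right_inv
  show σ.toPEquiv.toMatrix * (σ⁻¹).toPEquiv.toMatrix = 1
  rw [← PEquiv.toMatrix_trans, ← Equiv.toPEquiv_trans]
  show (σ.trans σ.symm).toPEquiv.toMatrix = (1 : Matrix _ _ ℂ)
  rw [Equiv.self_trans_symm, Equiv.toPEquiv_refl, PEquiv.toMatrix_refl]

lemma perm_conj {m : ℕ} (σ : Equiv.Perm (Fin m)) (d : Fin m → ℂ) :
    σ.permMatrix ℂ * Matrix.diagonal d * (σ.permMatrix ℂ)⁻¹ = Matrix.diagonal (d ∘ σ) := by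
  rw [perm_inv, PEquiv.toMatrix_toPEquiv_mul, PEquiv.mul_toMatrix_toPEquiv]
  show ((Matrix.diagonal d).submatrix σ id).submatrix id σ = _
  rw [Matrix.submatrix_submatrix, Function.comp_id, Function.id_comp,
    Matrix.submatrix_diagonal_equiv]

section dlemmas

variable {n : ℕ} {a b : ℤ} (j : Fin (2 * n))

lemma d1_0 (h : (j : ℕ) = 0) : d1 n a b j = Complex.I ^ a := by
  simp [d1, h]

lemma d1_mid (hn : 3 ≤ n) (h1 : 1 ≤ (j : ℕ)) (h2 : (j : ℕ) ≤ n - 2) :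
    d1 n a b j = Complex.I ^ (a + b) := by
  simp only [d1]; rw [if_neg (by omega), if_pos h2]

lemma d1_n1 (hn : 3 ≤ n) (h : (j : ℕ) = n - 1) : d1 n a b j = Complex.I ^ b := by
  simp only [d1]; rw [if_neg (by omega), if_neg (by omega), if_pos h]

lemma d1_n (hn : 3 ≤ n) (h : (j : ℕ) = n) : d1 n a b j = (-Complex.I) ^ b := by
  simp only [d1]
  rw [if_neg (by omega), if_neg (by omega), if_neg (by omega), if_pos h]

lemma d1_mid2 (hn : 3 ≤ n) (h1 : n + 1 ≤ (j : ℕ)) (h2 : (j : ℕ) ≤ 2 * n - 2) :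
    d1 n a b j = (-Complex.I) ^ (a + b) := by
  simp only [d1]
  rw [if_neg (by omega), if_neg (by omega), if_neg (by omega), if_neg (by omega), if_pos h2]

lemma d1_top (hn : 3 ≤ n) (h : (j : ℕ) = 2 * n - 1) : d1 n a b j = (-Complex.I) ^ a := by
  simp only [d1]
  rw [if_neg (by omega), if_neg (by omega), if_neg (by omega), if_neg (by omega),
    if_neg (by omega)]

lemma d2_n1 (h : (j : ℕ) = n - 1) : d2 n a b j = (-Complex.I) ^ b := by
  simp [d2, h]

lemma d2_n (hn : 3 ≤ n) (h : (j : ℕ) = n) : d2 n a b j = Complex.I ^ b := by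
  simp only [d2]; rw [if_neg (by omega), if_pos h]

lemma d2_other (h1 : (j : ℕ) ≠ n - 1) (h2 : (j : ℕ) ≠ n) : d2 n a b j = d1 n a b j := by
  simp [d2, h1, h2]

end dlemmas

/-- The key combinatorial computation: conjugating `d1` by the double swap gives `d2`. -/
lemma conj_fun (n : ℕ) (hn : 3 ≤ n) (a b : ℤ) (p q : Fin (2 * n)) (hq : (q : ℕ) = 2 * n - 1 - p)
    (hpq : (p : ℕ) < n - 1) (hdp : d1 n a b q = d1 n a b p) (hdq : d1 n a b p = d1 n a b q) :
    (d1 n a b) ∘ (Equiv.swap (⟨n - 1, by omega⟩ : Fin (2 * n)) ⟨n, by omega⟩ *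
      Equiv.swap p q) = d2 n a b := by
  have hplt := p.isLt
  funext j
  have hjlt := j.isLt
  simp only [Function.comp_apply, Equiv.Perm.mul_apply]
  have hqv : (n : ℕ) < (q : ℕ) := by omega
  rcases eq_or_ne j p with rfl | hjp
  · rw [Equiv.swap_apply_left,
      Equiv.swap_apply_of_ne_of_ne (Fin.ne_of_val_ne (show (q : ℕ) ≠ n - 1 by omega))
        (Fin.ne_of_val_ne (show (q : ℕ) ≠ n by omega)),
      d2_other _ (by omega) (by omega), hdp]
  · rcases eq_or_ne j q with rfl | hjq
    · rw [Equiv.swap_apply_right,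
        Equiv.swap_apply_of_ne_of_ne (Fin.ne_of_val_ne (show (p : ℕ) ≠ n - 1 by omega))
          (Fin.ne_of_val_ne (show (p : ℕ) ≠ n by omega)),
        d2_other _ (by omega) (by omega), hdq]
    · rw [Equiv.swap_apply_of_ne_of_ne hjp hjq]
      by_cases h1 : (j : ℕ) = n - 1
      · have hj : j = (⟨n - 1, by omega⟩ : Fin (2 * n)) := Fin.ext h1
        rw [hj, Equiv.swap_apply_left, d1_n _ hn rfl, d2_n1 _ rfl]
      · by_cases h2 : (j : ℕ) = n
        · have hj : j = (⟨n, by omega⟩ : Fin (2 * n)) := Fin.ext h2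
          rw [hj, Equiv.swap_apply_right, d1_n1 _ hn rfl, d2_n _ hn rfl]
        · rw [Equiv.swap_apply_of_ne_of_ne (Fin.ne_of_val_ne (show (j : ℕ) ≠ n - 1 from h1))
            (Fin.ne_of_val_ne (show (j : ℕ) ≠ n from h2)), d2_other _ h1 h2]

/-- For every `n ≥ 3` and all integers `a, b`, the matrices `M₁(a,b)` and `M₂(a,b)` are
conjugate in `SO_w(2n,ℂ)`. -/
theorem statement0 (n : ℕ) (hn : 3 ≤ n) (a b : ℤ) :
    ∃ g : Matrix (Fin (2 * n)) (Fin (2 * n)) ℂ,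
      gᵀ * wMat (2 * n) * g = wMat (2 * n) ∧ g.det = 1 ∧
        g * M1 n a b * g⁻¹ = M2 n a b := by
  rcases Int.even_or_odd b with hb | hb
  · -- `b` even : the two matrices coincide, take `g = 1`.
    refine ⟨1, by simp, by simp, ?_⟩
    rw [inv_one, mul_one, one_mul, M1, M2]
    refine congrArg Matrix.diagonal (funext fun j => ?_)
    have hib : (-Complex.I) ^ b = Complex.I ^ b := hb.neg_zpow _
    by_cases h1 : (j : ℕ) = n - 1
    · rw [d2_n1 _ h1, d1_n1 _ hn h1, hib]
    · by_cases h2 : (j : ℕ) = n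
      · rw [d2_n _ hn h2, d1_n _ hn h2, hib]
      · rw [d2_other _ h1 h2]
  · -- `b` odd : conjugate by a product of two antidiagonal swaps.
    have key : ∀ p q : Fin (2 * n), (q : ℕ) = 2 * n - 1 - p → (p : ℕ) < n - 1 →
        d1 n a b q = d1 n a b p → d1 n a b p = d1 n a b q →
        ∃ g : Matrix (Fin (2 * n)) (Fin (2 * n)) ℂ,
          gᵀ * wMat (2 * n) * g = wMat (2 * n) ∧ g.det = 1 ∧
            g * M1 n a b * g⁻¹ = M2 n a b := by
      intro p q hq hplt hdp hdq
      have hplt' := p.isLt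
      set σ : Equiv.Perm (Fin (2 * n)) :=
        Equiv.swap (⟨n - 1, by omega⟩ : Fin (2 * n)) ⟨n, by omega⟩ * Equiv.swap p q with hσdef
      have hrev1 : (⟨n, by omega⟩ : Fin (2 * n)) = Fin.rev ⟨n - 1, by omega⟩ := by
        rw [Fin.ext_iff, Fin.val_rev]
        show n = 2 * n - ((n - 1) + 1)
        omega
      have hrev2 : q = Fin.rev p := by
        rw [Fin.ext_iff, Fin.val_rev]
        omega
      have hσ : ∀ x, σ (Fin.rev x) = Fin.rev (σ x) := by
        intro x
        rw [hσdef, Equiv.Perm.mul_apply, Equiv.Perm.mul_apply,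
          swap_rev_comm p q hrev2, swap_rev_comm _ _ hrev1]
      refine ⟨σ.permMatrix ℂ, perm_w σ hσ, ?_, ?_⟩
      · rw [Matrix.det_permutation, hσdef, Equiv.Perm.sign_mul,
          Equiv.Perm.sign_swap (Fin.ne_of_val_ne (show n - 1 ≠ n by omega)),
          Equiv.Perm.sign_swap (Fin.ne_of_val_ne (show (p : ℕ) ≠ (q : ℕ) by omega))]
        norm_num
      · rw [M1, M2, perm_conj]
        exact congrArg Matrix.diagonal (conj_fun n hn a b p q hq hplt hdp hdq)
    rcases Int.even_or_odd a with ha | ha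
    · -- `a` even : swap positions `0` and `2n-1` as well.
      have hA : ∀ u v : Fin (2 * n), (u : ℕ) = 2 * n - 1 → (v : ℕ) = 0 →
          d1 n a b u = d1 n a b v := by
        intro u v hu hv
        rw [d1_top _ hn hu, d1_0 _ hv, ha.neg_zpow]
      exact key ⟨0, by omega⟩ ⟨2 * n - 1, by omega⟩ (show 2 * n - 1 = 2 * n - 1 - 0 by omega)
        (show 0 < n - 1 by omega) (hA _ _ rfl rfl) (hA _ _ rfl rfl).symm
    · -- `a` odd, so `a + b` even : swap positions `1` and `2n-2` as well.
      have hab : Even (a + b) := ha.add_odd hb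
      have hB : ∀ u v : Fin (2 * n), (u : ℕ) = 2 * n - 2 → (v : ℕ) = 1 →
          d1 n a b u = d1 n a b v := by
        intro u v hu hv
        rw [d1_mid2 _ hn (by omega) (by omega), d1_mid _ hn (by omega) (by omega), hab.neg_zpow]
      exact key ⟨1, by omega⟩ ⟨2 * n - 2, by omega⟩ (show 2 * n - 2 = 2 * n - 1 - 1 by omega)
        (show 1 < n - 1 by omega) (hB _ _ rfl rfl) (hB _ _ rfl rfl).symm

end
end

section
/- Let n ≥ 3 and let t = diag(i·I_{n−1}, I₂, −i·I_{n−1}) ∈ GL_{2n}(ℂ) (diagonal with entry i in positions 1,…,n−1, entry 1 in positions n, n+1, and entry −i in positions n+2,…,2n). A matrix M ∈ SO_w(2n,ℂ) commutes with t if and only if M is the block-diagonal matrix diag(A, B, w_{n−1}·(Aᵀ)⁻¹·w_{n−1}) for some A ∈ GL_{n−1}(ℂ) and some B ∈ SO_w(2,ℂ). -/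
open Matrix

noncomputable section

/-- The `2n × 2n` block-diagonal matrix `diag(A, B, C)` with diagonal blocks
`A` of size `n−1`, `B` of size `2` and `C` of size `n−1`, and zeros elsewhere. -/
def blockDiag3 (n : ℕ) (A : Matrix (Fin (n - 1)) (Fin (n - 1)) ℂ)
    (B : Matrix (Fin 2) (Fin 2) ℂ) (C : Matrix (Fin (n - 1)) (Fin (n - 1)) ℂ) :
    Matrix (Fin (2 * n)) (Fin (2 * n)) ℂ :=
  Matrix.of fun j k =>
    if hj : (j : ℕ) < n - 1 then
      if hk : (k : ℕ) < n - 1 then A ⟨(j : ℕ), hj⟩ ⟨(k : ℕ), hk⟩ else 0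
    else if hj2 : (j : ℕ) < n + 1 then
      if hk2 : (k : ℕ) < n + 1 ∧ ¬ (k : ℕ) < n - 1 then
        B ⟨(j : ℕ) - (n - 1), by omega⟩ ⟨(k : ℕ) - (n - 1), by omega⟩
      else 0
    else
      if hk3 : n + 1 ≤ (k : ℕ) then
        C ⟨(j : ℕ) - (n + 1), by have := j.isLt; omega⟩
          ⟨(k : ℕ) - (n + 1), by have := k.isLt; omega⟩
      else 0

/-- The diagonal matrix `t = diag(i·I_{n−1}, I₂, −i·I_{n−1})` of size `2n`. -/
def tMat (n : ℕ) : Matrix (Fin (2 * n)) (Fin (2 * n)) ℂ :=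
  Matrix.diagonal fun j =>
    if (j : ℕ) < n - 1 then Complex.I
    else if (j : ℕ) < n + 1 then 1
    else -Complex.I

lemma wMat_mul_self (m : ℕ) : wMat m * wMat m = 1 := by
  ext j k
  rw [Matrix.mul_apply, Finset.sum_eq_single j.rev]
  · have hj := j.isLt
    have hk := k.isLt
    simp only [wMat, of_apply, Fin.val_rev, Matrix.one_apply, Fin.ext_iff]
    split_ifs <;> first | omega | ring
  · intro b _ hb
    have hj := j.isLt
    have hbv : (b : ℕ) ≠ m - 1 - (j : ℕ) := by
      intro h; apply hb; apply Fin.ext; rw [Fin.val_rev]; omega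
    have hb2 := b.isLt
    simp only [wMat, of_apply]
    rw [if_neg (by omega)]
    ring
  · intro h; exact absurd (Finset.mem_univ _) h

lemma isUnit_wMat_det (m : ℕ) : IsUnit (wMat m).det :=
  IsUnit.of_mul_eq_one _ (by rw [← Matrix.det_mul, wMat_mul_self, Matrix.det_one])

def eEquiv (n : ℕ) (hn : 1 ≤ n) : (Fin (n-1) ⊕ (Fin 2 ⊕ Fin (n-1))) ≃ Fin (2*n) :=
  ((Equiv.sumCongr (Equiv.refl _) finSumFinEquiv).trans finSumFinEquiv).trans
    (finCongr (by omega))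

lemma eEquiv_val_inl (n : ℕ) (hn : 1 ≤ n) (j : Fin (n-1)) :
    ((eEquiv n hn (Sum.inl j) : Fin (2*n)) : ℕ) = (j : ℕ) := by
  simp [eEquiv]

lemma eEquiv_val_inrl (n : ℕ) (hn : 1 ≤ n) (b : Fin 2) :
    ((eEquiv n hn (Sum.inr (Sum.inl b)) : Fin (2*n)) : ℕ) = n - 1 + (b : ℕ) := by
  simp [eEquiv]

lemma eEquiv_val_inrr (n : ℕ) (hn : 1 ≤ n) (k : Fin (n-1)) :
    ((eEquiv n hn (Sum.inr (Sum.inr k)) : Fin (2*n)) : ℕ) = n + 1 + (k : ℕ) := by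
  simp [eEquiv]; omega

def dFun (n : ℕ) (j : Fin (2*n)) : ℂ :=
  if (j : ℕ) < n - 1 then Complex.I else if (j : ℕ) < n + 1 then 1 else -Complex.I

lemma tMat_eq (n : ℕ) : tMat n = Matrix.diagonal (dFun n) := rfl

lemma blockDiag3_comm (n : ℕ) (A B C) :
    blockDiag3 n A B C * tMat n = tMat n * blockDiag3 n A B C := by
  ext j k
  rw [tMat_eq, Matrix.mul_diagonal, Matrix.diagonal_mul]
  simp only [blockDiag3, dFun, of_apply]
  split_ifs <;> first | omega | ring

lemma bd_apply_11 (n : ℕ) (A B C) (x y : Fin (2*n)) (j k : Fin (n-1))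
    (hx : (x : ℕ) = (j : ℕ)) (hy : (y : ℕ) = (k : ℕ)) :
    blockDiag3 n A B C x y = A j k := by
  have hj := j.isLt; have hk := k.isLt
  have h1 : (x : ℕ) < n - 1 := by omega
  have h2 : (y : ℕ) < n - 1 := by omega
  simp only [blockDiag3, of_apply]
  rw [dif_pos h1, dif_pos h2,
    show (⟨(x : ℕ), h1⟩ : Fin (n-1)) = j from Fin.ext hx,
    show (⟨(y : ℕ), h2⟩ : Fin (n-1)) = k from Fin.ext hy]

lemma bd_apply_22 (n : ℕ) (A B C) (x y : Fin (2*n)) (b c : Fin 2) (hn : 1 ≤ n)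
    (hx : (x : ℕ) = n - 1 + (b : ℕ)) (hy : (y : ℕ) = n - 1 + (c : ℕ)) :
    blockDiag3 n A B C x y = B b c := by
  have hb := b.isLt; have hc := c.isLt
  simp only [blockDiag3, of_apply]
  rw [dif_neg (by omega), dif_pos (show (x:ℕ) < n + 1 by omega),
    dif_pos (show (y:ℕ) < n + 1 ∧ ¬ (y:ℕ) < n - 1 by omega)]
  congr 1 <;> exact Fin.ext (by simp; omega)

lemma bd_apply_33 (n : ℕ) (A B C) (x y : Fin (2*n)) (j k : Fin (n-1))
    (hx : (x : ℕ) = n + 1 + (j : ℕ)) (hy : (y : ℕ) = n + 1 + (k : ℕ)) :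
    blockDiag3 n A B C x y = C j k := by
  have hj := j.isLt; have hk := k.isLt
  simp only [blockDiag3, of_apply]
  rw [dif_neg (by omega), dif_neg (by omega), dif_pos (show n + 1 ≤ (y:ℕ) by omega)]
  congr 1 <;> exact Fin.ext (by simp; omega)

lemma bd_apply_zero (n : ℕ) (A B C) (x y : Fin (2*n))
    (h : ¬ ((x : ℕ) < n - 1 ↔ (y : ℕ) < n - 1) ∨ ¬ ((x : ℕ) < n + 1 ↔ (y : ℕ) < n + 1)) :
    blockDiag3 n A B C x y = 0 := by
  simp only [blockDiag3, of_apply]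
  split_ifs <;> first | rfl | omega


lemma wSub (n : ℕ) (hn : 3 ≤ n) :
    (wMat (2*n)).submatrix (eEquiv n (by omega)) (eEquiv n (by omega)) =
      fromBlocks 0 (fromCols 0 (wMat (n-1))) (fromRows 0 (wMat (n-1)))
        (fromBlocks (wMat 2) 0 0 0) := by
  have h1 := eEquiv_val_inl n (by omega)
  have h2 := eEquiv_val_inrl n (by omega)
  have h3 := eEquiv_val_inrr n (by omega)
  ext x y
  rcases x with j | b | j <;> rcases y with k | c | k <;>
    simp only [submatrix_apply, wMat, of_apply, fromBlocks_apply₁₁, fromBlocks_apply₁₂,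
      fromBlocks_apply₂₁, fromBlocks_apply₂₂, fromCols_apply_inl, fromCols_apply_inr,
      fromRows_apply_inl, fromRows_apply_inr, Matrix.zero_apply, h1, h2, h3]
  · exact if_neg (by have := j.isLt; have := k.isLt; omega)
  · exact if_neg (by have := j.isLt; have := c.isLt; omega)
  · have := j.isLt; have := k.isLt
    split_ifs <;> first | rfl | omega
  · exact if_neg (by have := b.isLt; have := k.isLt; omega)
  · have := b.isLt; have := c.isLt
    split_ifs <;> first | rfl | omega
  · exact if_neg (by have := b.isLt; have := k.isLt; omega)
  · have := j.isLt; have := k.isLt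
    split_ifs <;> first | rfl | omega
  · exact if_neg (by have := j.isLt; have := c.isLt; omega)
  · exact if_neg (by have := j.isLt; have := k.isLt; omega)

lemma bd_sub (n : ℕ) (hn : 3 ≤ n) (A B C) :
    (blockDiag3 n A B C).submatrix (eEquiv n (by omega)) (eEquiv n (by omega)) =
      fromBlocks A 0 0 (fromBlocks B 0 0 C) := by
  have h1 := eEquiv_val_inl n (show 1 ≤ n by omega)
  have h2 := eEquiv_val_inrl n (show 1 ≤ n by omega)
  have h3 := eEquiv_val_inrr n (show 1 ≤ n by omega)
  ext x y
  rcases x with j | b | j <;> rcases y with k | c | k <;>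
    simp only [submatrix_apply, fromBlocks_apply₁₁, fromBlocks_apply₁₂,
      fromBlocks_apply₂₁, fromBlocks_apply₂₂, Matrix.zero_apply]
  · exact bd_apply_11 n A B C _ _ j k (h1 j) (h1 k)
  · exact bd_apply_zero n A B C _ _ (by have := j.isLt; have := c.isLt; left; rw [h1, h2]; omega)
  · exact bd_apply_zero n A B C _ _ (by have := j.isLt; have := k.isLt; right; rw [h1, h3]; omega)
  · exact bd_apply_zero n A B C _ _ (by have := b.isLt; have := k.isLt; left; rw [h2, h1]; omega)
  · exact bd_apply_22 n A B C _ _ b c (by omega) (h2 b) (h2 c)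
  · exact bd_apply_zero n A B C _ _ (by have := b.isLt; have := k.isLt; right; rw [h2, h3]; omega)
  · exact bd_apply_zero n A B C _ _ (by have := j.isLt; have := k.isLt; right; rw [h3, h1]; omega)
  · exact bd_apply_zero n A B C _ _ (by have := j.isLt; have := c.isLt; right; rw [h3, h2]; omega)
  · exact bd_apply_33 n A B C _ _ j k (h3 j) (h3 k)

/-- A matrix `M ∈ SO_w(2n,ℂ)` commutes with `t = diag(i·I_{n−1}, I₂, −i·I_{n−1})` if and
only if `M = diag(A, B, w_{n−1}·(Aᵀ)⁻¹·w_{n−1})` for some `A ∈ GL_{n−1}(ℂ)` and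
`B ∈ SO_w(2,ℂ)`. -/
theorem statement5 (n : ℕ) (hn : 3 ≤ n) (M : Matrix (Fin (2 * n)) (Fin (2 * n)) ℂ)
    (hM1 : Mᵀ * wMat (2 * n) * M = wMat (2 * n)) (hM2 : M.det = 1) :
    M * tMat n = tMat n * M ↔
      ∃ (A : Matrix (Fin (n - 1)) (Fin (n - 1)) ℂ) (B : Matrix (Fin 2) (Fin 2) ℂ),
        IsUnit A ∧ (Bᵀ * wMat 2 * B = wMat 2 ∧ B.det = 1) ∧
          M = blockDiag3 n A B (wMat (n - 1) * (Aᵀ)⁻¹ * wMat (n - 1)) := by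
  have hn1 : (1:ℕ) ≤ n := by omega
  constructor
  · intro hc
    set e : (Fin (n-1) ⊕ (Fin 2 ⊕ Fin (n-1))) ≃ Fin (2*n) := eEquiv n hn1 with he
    -- entrywise consequence of commutation
    have hz : ∀ x y : Fin (2*n), dFun n x ≠ dFun n y → M x y = 0 := by
      intro x y hne
      have h := congrFun (congrFun hc x) y
      rw [tMat_eq, Matrix.mul_diagonal, Matrix.diagonal_mul] at h
      have h0 : M x y * (dFun n y - dFun n x) = 0 := by ring_nf; linear_combination h
      rcases mul_eq_zero.mp h0 with h0 | h0
      · exact h0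
      · exact absurd (sub_eq_zero.mp h0).symm hne
    have hI1 : Complex.I ≠ 1 := by
      intro h; simpa using congrArg Complex.im h
    have hInI : Complex.I ≠ -Complex.I := by
      intro h; have := congrArg Complex.im h; norm_num at this
    have h1nI : (1:ℂ) ≠ -Complex.I := by
      intro h; have := congrArg Complex.im h; norm_num at this
    have hd1 : ∀ j : Fin (n-1), dFun n (e (Sum.inl j)) = Complex.I := by
      intro j; have := j.isLt
      have hv : ((e (Sum.inl j) : Fin (2*n)) : ℕ) = (j:ℕ) := eEquiv_val_inl n hn1 j
      simp only [dFun]; rw [if_pos (by omega)]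
    have hd2 : ∀ b : Fin 2, dFun n (e (Sum.inr (Sum.inl b))) = 1 := by
      intro b; have := b.isLt
      have hv : ((e (Sum.inr (Sum.inl b)) : Fin (2*n)) : ℕ) = n - 1 + (b:ℕ) := eEquiv_val_inrl n hn1 b
      simp only [dFun]; rw [if_neg (by omega), if_pos (by omega)]
    have hd3 : ∀ k : Fin (n-1), dFun n (e (Sum.inr (Sum.inr k))) = -Complex.I := by
      intro k; have := k.isLt
      have hv : ((e (Sum.inr (Sum.inr k)) : Fin (2*n)) : ℕ) = n + 1 + (k:ℕ) := eEquiv_val_inrr n hn1 k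
      simp only [dFun]; rw [if_neg (by omega), if_neg (by omega)]
    set A : Matrix (Fin (n-1)) (Fin (n-1)) ℂ := (M.submatrix e e).toBlocks₁₁ with hA
    set B : Matrix (Fin 2) (Fin 2) ℂ := ((M.submatrix e e).toBlocks₂₂).toBlocks₁₁ with hB
    set C : Matrix (Fin (n-1)) (Fin (n-1)) ℂ := ((M.submatrix e e).toBlocks₂₂).toBlocks₂₂ with hC
    have hMsub : M.submatrix e e = fromBlocks A 0 0 (fromBlocks B 0 0 C) := by
      ext x y
      rcases x with j | b | j <;> rcases y with k | c | k <;>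
        simp only [submatrix_apply, fromBlocks_apply₁₁, fromBlocks_apply₁₂, fromBlocks_apply₂₁,
          fromBlocks_apply₂₂, Matrix.zero_apply, hA, hB, hC, toBlocks₁₁, toBlocks₂₂, of_apply]
      · exact hz _ _ (by rw [hd1, hd2]; exact hI1)
      · exact hz _ _ (by rw [hd1, hd3]; exact hInI)
      · exact hz _ _ (by rw [hd2, hd1]; exact fun h => hI1 h.symm)
      · exact hz _ _ (by rw [hd2, hd3]; exact h1nI)
      · exact hz _ _ (by rw [hd3, hd1]; exact fun h => hInI h.symm)
      · exact hz _ _ (by rw [hd3, hd2]; exact fun h => h1nI h.symm)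
    have hsub1 : (M.submatrix e e)ᵀ * (wMat (2*n)).submatrix e e * M.submatrix e e
        = (wMat (2*n)).submatrix e e := by
      rw [transpose_submatrix, submatrix_mul_equiv, submatrix_mul_equiv, hM1]
    have hW : (wMat (2*n)).submatrix e e =
        fromBlocks 0 (fromCols 0 (wMat (n-1))) (fromRows 0 (wMat (n-1)))
          (fromBlocks (wMat 2) 0 0 0) := wSub n hn
    rw [hMsub, hW] at hsub1
    simp only [fromBlocks_transpose, transpose_zero, fromBlocks_multiply, Matrix.mul_zero,
      Matrix.zero_mul, add_zero, zero_add, mul_fromCols, fromCols_mul_fromBlocks,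
      fromBlocks_mul_fromRows, fromRows_mul, fromBlocks_inj, fromCols_ext_iff,
      fromRows_ext_iff] at hsub1
    obtain ⟨hU, hL, hV⟩ := hsub1
    have hAC : Aᵀ * wMat (n-1) * C = wMat (n-1) := hL.2
    have hBw : Bᵀ * wMat 2 * B = wMat 2 := hV.2.1
    have hdet : A.det * (B.det * C.det) = 1 := by
      have h1 : (M.submatrix e e).det = M.det := Matrix.det_submatrix_equiv_self e M
      rw [hMsub, hM2] at h1
      rwa [Matrix.det_fromBlocks_zero₂₁, Matrix.det_fromBlocks_zero₂₁] at h1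
    have hw0 : (wMat (n-1)).det ≠ 0 := (isUnit_wMat_det (n-1)).ne_zero
    have hACdet : A.det * C.det = 1 := by
      have h2 := congrArg Matrix.det hAC
      rw [Matrix.det_mul, Matrix.det_mul, Matrix.det_transpose] at h2
      refine mul_left_cancel₀ hw0 ?_
      rw [mul_one]; linear_combination h2
    have hdetB : B.det = 1 := by linear_combination hdet - B.det * hACdet
    have hAunit : IsUnit A := (Matrix.isUnit_iff_isUnit_det A).mpr
      (IsUnit.of_mul_eq_one _ hACdet)
    have hATdet : IsUnit Aᵀ.det := by
      rw [Matrix.det_transpose]; exact (Matrix.isUnit_iff_isUnit_det A).mp hAunit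
    have hCeq : C = wMat (n-1) * (Aᵀ)⁻¹ * wMat (n-1) := by
      have h4 := congrArg (fun X => (Aᵀ)⁻¹ * X) hAC
      simp only [Matrix.mul_assoc] at h4
      rw [← Matrix.mul_assoc (Aᵀ)⁻¹ Aᵀ, Matrix.nonsing_inv_mul _ hATdet,
        Matrix.one_mul] at h4
      calc C = (wMat (n-1) * wMat (n-1)) * C := by rw [wMat_mul_self, Matrix.one_mul]
        _ = wMat (n-1) * (wMat (n-1) * C) := by rw [Matrix.mul_assoc]
        _ = wMat (n-1) * ((Aᵀ)⁻¹ * wMat (n-1)) := by rw [h4]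
        _ = wMat (n-1) * (Aᵀ)⁻¹ * wMat (n-1) := by rw [Matrix.mul_assoc]
    refine ⟨A, B, hAunit, ⟨hBw, hdetB⟩, ?_⟩
    have hbd : (blockDiag3 n A B C).submatrix e e = fromBlocks A 0 0 (fromBlocks B 0 0 C) :=
      bd_sub n hn A B C
    have hMC : M = blockDiag3 n A B C := by
      ext x y
      have h5 := congrFun (congrFun (hMsub.trans hbd.symm) (e.symm x)) (e.symm y)
      simpa using h5
    rw [hCeq] at hMC
    exact hMC
  · rintro ⟨A, B, hA, ⟨hB1, hB2⟩, rfl⟩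
    exact blockDiag3_comm n A B _

end
end

section
/- Let g ∈ GL_n(ℂ) be an invertible diagonalizable matrix (similar to a diagonal matrix). Then there exists an integer d ≥ 1 such that for every integer k ≥ 1, an n×n complex matrix x commutes with g^{dk} if and only if x commutes with g^d; i.e. the centralizer of g^{dk} in M_n(ℂ) equals the centralizer of g^d for all k ≥ 1. -/
noncomputable section

lemma conj_comm_aux {n : ℕ} (P P' E x : Matrix (Fin n) (Fin n) ℂ)
    (h1 : P * P' = 1) (h2 : P' * P = 1) :
    x * (P * E * P') = (P * E * P') * x ↔ (P' * x * P) * E = E * (P' * x * P) := by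
  have c1 : ∀ A : Matrix (Fin n) (Fin n) ℂ, P * (P' * A) = A := fun A => by
    rw [← Matrix.mul_assoc, h1, Matrix.one_mul]
  have c2 : ∀ A : Matrix (Fin n) (Fin n) ℂ, P' * (P * A) = A := fun A => by
    rw [← Matrix.mul_assoc, h2, Matrix.one_mul]
  constructor
  · intro h
    have := congrArg (fun y => P' * y * P) h
    simp only [Matrix.mul_assoc, h1, h2, c1, c2, Matrix.mul_one] at this ⊢
    exact this
  · intro h
    have := congrArg (fun y => P * y * P') h
    simp only [Matrix.mul_assoc, h1, h2, c1, c2, Matrix.mul_one] at this ⊢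
    exact this

lemma conj_pow_aux {n : ℕ} (P P' E : Matrix (Fin n) (Fin n) ℂ)
    (h1 : P * P' = 1) (h2 : P' * P = 1) (m : ℕ) :
    (P * E * P') ^ m = P * E ^ m * P' := by
  induction m with
  | zero => simp [h1]
  | succ m ih =>
    rw [pow_succ, ih, pow_succ]
    calc P * E ^ m * P' * (P * E * P') = P * E ^ m * (P' * P) * E * P' := by
          simp only [Matrix.mul_assoc]
      _ = P * (E ^ m * E) * P' := by rw [h2]; simp only [Matrix.mul_one, Matrix.mul_assoc]

/-- If `g ∈ GL_n(ℂ)` is an invertible diagonalizable matrix, then there is `d ≥ 1` such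
that for all `k ≥ 1` the centralizer of `g^{dk}` in `M_n(ℂ)` equals that of `g^d`. -/
theorem statement16 (n : ℕ) (g : Matrix (Fin n) (Fin n) ℂ) (hg : IsUnit g)
    (hdiag : ∃ (P D : Matrix (Fin n) (Fin n) ℂ), IsUnit P ∧ D.IsDiag ∧ g = P * D * P⁻¹) :
    ∃ d : ℕ, 1 ≤ d ∧ ∀ k : ℕ, 1 ≤ k →
      ∀ x : Matrix (Fin n) (Fin n) ℂ,
        x * g ^ (d * k) = g ^ (d * k) * x ↔ x * g ^ d = g ^ d * x := by
  obtain ⟨P, D, hP, hD, rfl⟩ := hdiag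
  set v : Fin n → ℂ := Matrix.diag D with hv
  have hDdiag : D = Matrix.diagonal v := (hD.diagonal_diag).symm
  have hPdet : IsUnit P.det := (Matrix.isUnit_iff_isUnit_det P).mp hP
  have h1 : P * P⁻¹ = 1 := Matrix.mul_nonsing_inv P hPdet
  have h2 : P⁻¹ * P = 1 := Matrix.nonsing_inv_mul P hPdet
  have hvne : ∀ i, v i ≠ 0 := by
    have hdet : (P * D * P⁻¹).det ≠ 0 := by
      have := (Matrix.isUnit_iff_isUnit_det _).mp hg
      exact this.ne_zero
    rw [Matrix.det_mul, Matrix.det_mul] at hdet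
    have hDdet : D.det ≠ 0 := fun h0 => hdet (by rw [h0]; ring)
    rw [hDdiag, Matrix.det_diagonal] at hDdet
    intro i hi
    exact hDdet (Finset.prod_eq_zero (Finset.mem_univ i) hi)
  set u : Fin n → ℂˣ := fun i => Units.mk0 (v i) (hvne i) with hu
  set f : Fin n × Fin n → ℕ := fun p =>
    if orderOf (u p.1 / u p.2) = 0 then 1 else orderOf (u p.1 / u p.2) with hf
  set d : ℕ := Finset.univ.lcm f with hd
  have hfpos : ∀ p, f p ≠ 0 := by
    intro p
    simp only [hf]
    split
    · exact one_ne_zero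
    · assumption
  have hdpos : 1 ≤ d := by
    rw [Nat.one_le_iff_ne_zero, hd]
    intro h0
    rw [Finset.lcm_eq_zero_iff] at h0
    obtain ⟨p, -, hp⟩ := h0
    exact hfpos p hp
  have key : ∀ k, 1 ≤ k → ∀ i j, (v i ^ (d * k) = v j ^ (d * k) ↔ v i ^ d = v j ^ d) := by
    intro k hk i j
    have hcast : ∀ m : ℕ, (v i ^ m = v j ^ m ↔ (u i / u j) ^ m = 1) := by
      intro m
      rw [div_pow, div_eq_one]
      constructor
      · intro h; ext; simpa [hu] using h
      · intro h; simpa [hu] using congrArg Units.val h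
    rw [hcast, hcast]
    constructor
    · intro h
      have hfin : orderOf (u i / u j) ≠ 0 := by
        intro h0
        have hfo : IsOfFinOrder (u i / u j) :=
          isOfFinOrder_iff_pow_eq_one.mpr ⟨d * k, by positivity, h⟩
        exact (orderOf_eq_zero_iff.mp h0) hfo
      have hdvd2 : orderOf (u i / u j) ∣ d := by
        have hfd : f (i, j) ∣ d := Finset.dvd_lcm (Finset.mem_univ _)
        simpa [hf, hfin] using hfd
      exact orderOf_dvd_iff_pow_eq_one.mp hdvd2
    · intro h
      rw [pow_mul, h, one_pow]
  refine ⟨d, hdpos, ?_⟩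
  intro k hk x
  have hgpow : ∀ m : ℕ, (P * D * P⁻¹) ^ m = P * Matrix.diagonal (fun i => v i ^ m) * P⁻¹ := by
    intro m
    rw [conj_pow_aux P P⁻¹ D h1 h2, hDdiag, Matrix.diagonal_pow]
    rfl
  have hcomm : ∀ m : ℕ, (x * (P * D * P⁻¹) ^ m = (P * D * P⁻¹) ^ m * x ↔
      ∀ i j, (P⁻¹ * x * P) i j * v j ^ m = v i ^ m * (P⁻¹ * x * P) i j) := by
    intro m
    rw [hgpow, conj_comm_aux P P⁻¹ _ x h1 h2, ← Matrix.ext_iff]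
    constructor
    · intro h i j; simpa [Matrix.mul_diagonal, Matrix.diagonal_mul] using h i j
    · intro h i j; simpa [Matrix.mul_diagonal, Matrix.diagonal_mul] using h i j
  rw [hcomm, hcomm]
  set y := P⁻¹ * x * P with hy
  have step : ∀ m₁ m₂ : ℕ, (∀ i j, v i ^ m₁ = v j ^ m₁ ↔ v i ^ m₂ = v j ^ m₂) →
      (∀ i j, y i j * v j ^ m₁ = v i ^ m₁ * y i j) →
      (∀ i j, y i j * v j ^ m₂ = v i ^ m₂ * y i j) := by
    intro m₁ m₂ hiff h i j
    rcases eq_or_ne (y i j) 0 with h0 | h0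
    · simp [h0]
    · have hij := h i j
      rw [mul_comm (v i ^ m₁)] at hij
      have heq : v j ^ m₁ = v i ^ m₁ := mul_left_cancel₀ h0 hij
      have heq2 : v j ^ m₂ = v i ^ m₂ := (hiff j i).mp heq
      rw [heq2, mul_comm]
  exact ⟨step (d * k) d (fun i j => key k hk i j),
    step d (d * k) (fun i j => (key k hk i j).symm)⟩

end
end
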